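/- Define P_n(r) = ((1/n)∑_{i=1}^n i^r / ((1/(n+1))∑_{i=1}^{n+1} i^r))^{1/r} for r ≠ 0. Then for every integer n ≥ 1 and real numbers r, r' with r ≤ 1 < r', P_n(r) ≥ P_n(r'). -/

import Mathlib

open Finset Real

lemma three_pt_nonpos {r : ℝ} (hr : r ≤ 0) {x y a b : ℝ} (hx : 0 < x) (hy : 0 < y)
    (ha : 0 ≤ a) (hb : 0 ≤ b) (hab : a + b = 1) :
    (a * x + b * y) ^ r ≤ a * x ^ r + b * y ^ r := by
  have hgm : x ^ a * y ^ b ≤ a * x + b * y :=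
    Real.geom_mean_le_arith_mean2_weighted ha hb hx.le hy.le hab
  have h1 : (a * x + b * y) ^ r ≤ (x ^ a * y ^ b) ^ r :=
    Real.rpow_le_rpow_of_nonpos (by positivity) hgm hr
  have h2 : (x ^ a * y ^ b) ^ r = (x ^ r) ^ a * (y ^ r) ^ b := by
    rw [Real.mul_rpow (by positivity) (by positivity), ← Real.rpow_mul hx.le,
      ← Real.rpow_mul hy.le, mul_comm a r, mul_comm b r, Real.rpow_mul hx.le,
      Real.rpow_mul hy.le]
  have h3 : (x ^ r) ^ a * (y ^ r) ^ b ≤ a * x ^ r + b * y ^ r :=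
    Real.geom_mean_le_arith_mean2_weighted ha hb (by positivity) (by positivity) hab
  rw [h2] at h1
  linarith

lemma sum_id (c : ℕ → ℝ) (n : ℕ) :
    ∑ j ∈ Finset.Icc 1 n, (((n : ℝ) + 1 - (j : ℝ)) * c j + (j : ℝ) * c (j + 1))
      = (n : ℝ) * ∑ j ∈ Finset.Icc 1 (n + 1), c j := by
  induction n with
  | zero => simp
  | succ m ih =>
    have e1 : ∑ j ∈ Finset.Icc 1 (m + 1),
        ((((m + 1 : ℕ) : ℝ) + 1 - (j : ℝ)) * c j + (j : ℝ) * c (j + 1))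
        = ∑ j ∈ Finset.Icc 1 (m + 1),
            (((m : ℝ) + 1 - (j : ℝ)) * c j + (j : ℝ) * c (j + 1))
          + ∑ j ∈ Finset.Icc 1 (m + 1), c j := by
      rw [← Finset.sum_add_distrib]
      refine Finset.sum_congr rfl fun j _ => ?_
      push_cast; ring
    have e2 : ∑ j ∈ Finset.Icc 1 (m + 1),
        (((m : ℝ) + 1 - (j : ℝ)) * c j + (j : ℝ) * c (j + 1))
        = ∑ j ∈ Finset.Icc 1 m,
            (((m : ℝ) + 1 - (j : ℝ)) * c j + (j : ℝ) * c (j + 1))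
          + (((m : ℝ) + 1 - ((m + 1 : ℕ) : ℝ)) * c (m + 1)
             + ((m + 1 : ℕ) : ℝ) * c (m + 1 + 1)) :=
      Finset.sum_Icc_succ_top (by omega) _
    have e3 : ∑ j ∈ Finset.Icc 1 (m + 1 + 1), c j
        = ∑ j ∈ Finset.Icc 1 (m + 1), c j + c (m + 1 + 1) :=
      Finset.sum_Icc_succ_top (by omega) _
    rw [e1, e2, ih, e3]
    push_cast; ring

lemma cross_le (n : ℕ) (ρ : ℝ)
    (h : ∀ x y a b : ℝ, 0 < x → 0 < y → 0 ≤ a → 0 ≤ b → a + b = 1 →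
      (a * x + b * y) ^ ρ ≤ a * x ^ ρ + b * y ^ ρ) :
    ((n : ℝ) + 1) * ∑ i ∈ Finset.Icc 1 n, (((n : ℝ) + 2) * (i : ℝ)) ^ ρ
      ≤ (n : ℝ) * ∑ i ∈ Finset.Icc 1 (n + 1), (((n : ℝ) + 1) * (i : ℝ)) ^ ρ := by
  have key : ∀ j ∈ Finset.Icc 1 n,
      ((n : ℝ) + 1) * (((n : ℝ) + 2) * (j : ℝ)) ^ ρ
        ≤ ((n : ℝ) + 1 - (j : ℝ)) * (((n : ℝ) + 1) * (j : ℝ)) ^ ρ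
          + (j : ℝ) * (((n : ℝ) + 1) * ((j : ℝ) + 1)) ^ ρ := by
    intro j hj
    obtain ⟨hj1, hjn⟩ := Finset.mem_Icc.mp hj
    have hj1' : (1 : ℝ) ≤ (j : ℝ) := by exact_mod_cast hj1
    have hjn' : (j : ℝ) ≤ (n : ℝ) := by exact_mod_cast hjn
    have hn1 : (0 : ℝ) < (n : ℝ) + 1 := by positivity
    have ha : (0 : ℝ) ≤ ((n : ℝ) + 1 - (j : ℝ)) / ((n : ℝ) + 1) := by
      apply div_nonneg <;> linarith
    have hb : (0 : ℝ) ≤ (j : ℝ) / ((n : ℝ) + 1) := by positivity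
    have hab : ((n : ℝ) + 1 - (j : ℝ)) / ((n : ℝ) + 1) + (j : ℝ) / ((n : ℝ) + 1) = 1 := by
      field_simp
      ring
    have hx : (0 : ℝ) < ((n : ℝ) + 1) * (j : ℝ) := by nlinarith
    have hy : (0 : ℝ) < ((n : ℝ) + 1) * ((j : ℝ) + 1) := by nlinarith
    have h3 := h _ _ _ _ hx hy ha hb hab
    have hcomb : ((n : ℝ) + 1 - (j : ℝ)) / ((n : ℝ) + 1) * (((n : ℝ) + 1) * (j : ℝ))
        + (j : ℝ) / ((n : ℝ) + 1) * (((n : ℝ) + 1) * ((j : ℝ) + 1))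
        = ((n : ℝ) + 2) * (j : ℝ) := by field_simp; ring
    rw [hcomb] at h3
    have := mul_le_mul_of_nonneg_left h3 hn1.le
    calc ((n : ℝ) + 1) * (((n : ℝ) + 2) * (j : ℝ)) ^ ρ
        ≤ ((n : ℝ) + 1) * (((n : ℝ) + 1 - (j : ℝ)) / ((n : ℝ) + 1) * (((n : ℝ) + 1) * (j : ℝ)) ^ ρ
            + (j : ℝ) / ((n : ℝ) + 1) * (((n : ℝ) + 1) * ((j : ℝ) + 1)) ^ ρ) := this
      _ = ((n : ℝ) + 1 - (j : ℝ)) * (((n : ℝ) + 1) * (j : ℝ)) ^ ρ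
            + (j : ℝ) * (((n : ℝ) + 1) * ((j : ℝ) + 1)) ^ ρ := by field_simp
  calc ((n : ℝ) + 1) * ∑ i ∈ Finset.Icc 1 n, (((n : ℝ) + 2) * (i : ℝ)) ^ ρ
      = ∑ i ∈ Finset.Icc 1 n, ((n : ℝ) + 1) * (((n : ℝ) + 2) * (i : ℝ)) ^ ρ :=
        Finset.mul_sum _ _ _
    _ ≤ ∑ j ∈ Finset.Icc 1 n, (((n : ℝ) + 1 - (j : ℝ)) * (((n : ℝ) + 1) * (j : ℝ)) ^ ρ
          + (j : ℝ) * (((n : ℝ) + 1) * ((j : ℝ) + 1)) ^ ρ) := Finset.sum_le_sum key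
    _ = ∑ j ∈ Finset.Icc 1 n, (((n : ℝ) + 1 - (j : ℝ))
          * ((fun k : ℕ => (((n : ℝ) + 1) * (k : ℝ)) ^ ρ) j)
          + (j : ℝ) * ((fun k : ℕ => (((n : ℝ) + 1) * (k : ℝ)) ^ ρ) (j + 1))) := by
        refine Finset.sum_congr rfl fun j _ => ?_
        push_cast
        ring_nf
    _ = (n : ℝ) * ∑ j ∈ Finset.Icc 1 (n + 1), (((n : ℝ) + 1) * (j : ℝ)) ^ ρ := by
        rw [sum_id (fun k : ℕ => (((n : ℝ) + 1) * (k : ℝ)) ^ ρ) n]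

lemma cross_ge (n : ℕ) (ρ : ℝ)
    (h : ∀ x y a b : ℝ, 0 < x → 0 < y → 0 ≤ a → 0 ≤ b → a + b = 1 →
      a * x ^ ρ + b * y ^ ρ ≤ (a * x + b * y) ^ ρ) :
    (n : ℝ) * ∑ i ∈ Finset.Icc 1 (n + 1), (((n : ℝ) + 1) * (i : ℝ)) ^ ρ
      ≤ ((n : ℝ) + 1) * ∑ i ∈ Finset.Icc 1 n, (((n : ℝ) + 2) * (i : ℝ)) ^ ρ := by
  have key : ∀ j ∈ Finset.Icc 1 n,
      ((n : ℝ) + 1 - (j : ℝ)) * (((n : ℝ) + 1) * (j : ℝ)) ^ ρ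
          + (j : ℝ) * (((n : ℝ) + 1) * ((j : ℝ) + 1)) ^ ρ
        ≤ ((n : ℝ) + 1) * (((n : ℝ) + 2) * (j : ℝ)) ^ ρ := by
    intro j hj
    obtain ⟨hj1, hjn⟩ := Finset.mem_Icc.mp hj
    have hj1' : (1 : ℝ) ≤ (j : ℝ) := by exact_mod_cast hj1
    have hjn' : (j : ℝ) ≤ (n : ℝ) := by exact_mod_cast hjn
    have hn1 : (0 : ℝ) < (n : ℝ) + 1 := by positivity
    have ha : (0 : ℝ) ≤ ((n : ℝ) + 1 - (j : ℝ)) / ((n : ℝ) + 1) := by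
      apply div_nonneg <;> linarith
    have hb : (0 : ℝ) ≤ (j : ℝ) / ((n : ℝ) + 1) := by positivity
    have hab : ((n : ℝ) + 1 - (j : ℝ)) / ((n : ℝ) + 1) + (j : ℝ) / ((n : ℝ) + 1) = 1 := by
      field_simp
      ring
    have hx : (0 : ℝ) < ((n : ℝ) + 1) * (j : ℝ) := by nlinarith
    have hy : (0 : ℝ) < ((n : ℝ) + 1) * ((j : ℝ) + 1) := by nlinarith
    have h3 := h _ _ _ _ hx hy ha hb hab
    have hcomb : ((n : ℝ) + 1 - (j : ℝ)) / ((n : ℝ) + 1) * (((n : ℝ) + 1) * (j : ℝ))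
        + (j : ℝ) / ((n : ℝ) + 1) * (((n : ℝ) + 1) * ((j : ℝ) + 1))
        = ((n : ℝ) + 2) * (j : ℝ) := by field_simp; ring
    rw [hcomb] at h3
    have := mul_le_mul_of_nonneg_left h3 hn1.le
    calc ((n : ℝ) + 1 - (j : ℝ)) * (((n : ℝ) + 1) * (j : ℝ)) ^ ρ
            + (j : ℝ) * (((n : ℝ) + 1) * ((j : ℝ) + 1)) ^ ρ
        = ((n : ℝ) + 1) * (((n : ℝ) + 1 - (j : ℝ)) / ((n : ℝ) + 1) * (((n : ℝ) + 1) * (j : ℝ)) ^ ρ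
            + (j : ℝ) / ((n : ℝ) + 1) * (((n : ℝ) + 1) * ((j : ℝ) + 1)) ^ ρ) := by field_simp
      _ ≤ ((n : ℝ) + 1) * (((n : ℝ) + 2) * (j : ℝ)) ^ ρ := this
  calc (n : ℝ) * ∑ j ∈ Finset.Icc 1 (n + 1), (((n : ℝ) + 1) * (j : ℝ)) ^ ρ
      = ∑ j ∈ Finset.Icc 1 n, (((n : ℝ) + 1 - (j : ℝ))
          * ((fun k : ℕ => (((n : ℝ) + 1) * (k : ℝ)) ^ ρ) j)
          + (j : ℝ) * ((fun k : ℕ => (((n : ℝ) + 1) * (k : ℝ)) ^ ρ) (j + 1))) := by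
        rw [sum_id (fun k : ℕ => (((n : ℝ) + 1) * (k : ℝ)) ^ ρ) n]
    _ = ∑ j ∈ Finset.Icc 1 n, (((n : ℝ) + 1 - (j : ℝ)) * (((n : ℝ) + 1) * (j : ℝ)) ^ ρ
          + (j : ℝ) * (((n : ℝ) + 1) * ((j : ℝ) + 1)) ^ ρ) := by
        refine Finset.sum_congr rfl fun j _ => ?_
        push_cast
        ring_nf
    _ ≤ ∑ j ∈ Finset.Icc 1 n, ((n : ℝ) + 1) * (((n : ℝ) + 2) * (j : ℝ)) ^ ρ :=
        Finset.sum_le_sum key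
    _ = ((n : ℝ) + 1) * ∑ i ∈ Finset.Icc 1 n, (((n : ℝ) + 2) * (i : ℝ)) ^ ρ :=
        (Finset.mul_sum _ _ _).symm

lemma sum_rpow_pos (N : ℕ) (hN : 1 ≤ N) (ρ : ℝ) :
    0 < ∑ i ∈ Finset.Icc 1 N, (i : ℝ) ^ ρ := by
  apply Finset.sum_pos
  · intro i hi
    obtain ⟨hi1, _⟩ := Finset.mem_Icc.mp hi
    have : (0 : ℝ) < (i : ℝ) := by exact_mod_cast Nat.lt_of_lt_of_le Nat.zero_lt_one hi1
    exact Real.rpow_pos_of_pos this ρ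
  · exact Finset.nonempty_Icc.mpr hN

lemma rescale (ρ : ℝ) (m : ℝ) (hm : 0 ≤ m) (N : ℕ) :
    m ^ ρ * ∑ i ∈ Finset.Icc 1 N, (i : ℝ) ^ ρ
      = ∑ i ∈ Finset.Icc 1 N, (m * (i : ℝ)) ^ ρ := by
  rw [Finset.mul_sum]
  exact Finset.sum_congr rfl fun i _ => (Real.mul_rpow hm (by positivity)).symm

lemma ratio_le_c (n : ℕ) (hn : 1 ≤ n) (ρ : ℝ)
    (hcross : ((n : ℝ) + 1) * ∑ i ∈ Finset.Icc 1 n, (((n : ℝ) + 2) * (i : ℝ)) ^ ρ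
      ≤ (n : ℝ) * ∑ i ∈ Finset.Icc 1 (n + 1), (((n : ℝ) + 1) * (i : ℝ)) ^ ρ) :
    (1 / (n : ℝ) * ∑ i ∈ Finset.Icc 1 n, (i : ℝ) ^ ρ) /
        (1 / ((n : ℝ) + 1) * ∑ i ∈ Finset.Icc 1 (n + 1), (i : ℝ) ^ ρ)
      ≤ (((n : ℝ) + 1) / ((n : ℝ) + 2)) ^ ρ := by
  have hn0 : (0 : ℝ) < (n : ℝ) := by exact_mod_cast hn
  have hS : 0 < ∑ i ∈ Finset.Icc 1 n, (i : ℝ) ^ ρ := sum_rpow_pos n hn ρ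
  have hS' : 0 < ∑ i ∈ Finset.Icc 1 (n + 1), (i : ℝ) ^ ρ := sum_rpow_pos (n + 1) (by omega) ρ
  rw [← rescale ρ ((n : ℝ) + 2) (by positivity) n, ← rescale ρ ((n : ℝ) + 1) (by positivity) (n + 1)]
    at hcross
  rw [Real.div_rpow (by positivity) (by positivity)]
  rw [div_le_div_iff₀ (by positivity) (by positivity)]
  have e1 : 1 / (n : ℝ) * (∑ i ∈ Finset.Icc 1 n, (i : ℝ) ^ ρ) * ((n : ℝ) + 2) ^ ρ
      = (((n : ℝ) + 1) * (((n : ℝ) + 2) ^ ρ * ∑ i ∈ Finset.Icc 1 n, (i : ℝ) ^ ρ))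
        / ((n : ℝ) * ((n : ℝ) + 1)) := by
    field_simp
  have e2 : ((n : ℝ) + 1) ^ ρ * (1 / ((n : ℝ) + 1) * ∑ i ∈ Finset.Icc 1 (n + 1), (i : ℝ) ^ ρ)
      = ((n : ℝ) * (((n : ℝ) + 1) ^ ρ * ∑ i ∈ Finset.Icc 1 (n + 1), (i : ℝ) ^ ρ))
        / ((n : ℝ) * ((n : ℝ) + 1)) := by
    field_simp
  rw [e1, e2]
  exact div_le_div_of_nonneg_right hcross (by positivity) |>.trans_eq rfl

lemma ratio_ge_c (n : ℕ) (hn : 1 ≤ n) (ρ : ℝ)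
    (hcross : (n : ℝ) * ∑ i ∈ Finset.Icc 1 (n + 1), (((n : ℝ) + 1) * (i : ℝ)) ^ ρ
      ≤ ((n : ℝ) + 1) * ∑ i ∈ Finset.Icc 1 n, (((n : ℝ) + 2) * (i : ℝ)) ^ ρ) :
    (((n : ℝ) + 1) / ((n : ℝ) + 2)) ^ ρ
      ≤ (1 / (n : ℝ) * ∑ i ∈ Finset.Icc 1 n, (i : ℝ) ^ ρ) /
        (1 / ((n : ℝ) + 1) * ∑ i ∈ Finset.Icc 1 (n + 1), (i : ℝ) ^ ρ) := by
  have hn0 : (0 : ℝ) < (n : ℝ) := by exact_mod_cast hn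
  have hS : 0 < ∑ i ∈ Finset.Icc 1 n, (i : ℝ) ^ ρ := sum_rpow_pos n hn ρ
  have hS' : 0 < ∑ i ∈ Finset.Icc 1 (n + 1), (i : ℝ) ^ ρ := sum_rpow_pos (n + 1) (by omega) ρ
  rw [← rescale ρ ((n : ℝ) + 2) (by positivity) n, ← rescale ρ ((n : ℝ) + 1) (by positivity) (n + 1)]
    at hcross
  rw [Real.div_rpow (by positivity) (by positivity)]
  rw [div_le_div_iff₀ (by positivity) (by positivity)]
  have e1 : 1 / (n : ℝ) * (∑ i ∈ Finset.Icc 1 n, (i : ℝ) ^ ρ) * ((n : ℝ) + 2) ^ ρ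
      = (((n : ℝ) + 1) * (((n : ℝ) + 2) ^ ρ * ∑ i ∈ Finset.Icc 1 n, (i : ℝ) ^ ρ))
        / ((n : ℝ) * ((n : ℝ) + 1)) := by
    field_simp
  have e2 : ((n : ℝ) + 1) ^ ρ * (1 / ((n : ℝ) + 1) * ∑ i ∈ Finset.Icc 1 (n + 1), (i : ℝ) ^ ρ)
      = ((n : ℝ) * (((n : ℝ) + 1) ^ ρ * ∑ i ∈ Finset.Icc 1 (n + 1), (i : ℝ) ^ ρ))
        / ((n : ℝ) * ((n : ℝ) + 1)) := by
    field_simp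
  rw [e1, e2]
  exact div_le_div_of_nonneg_right hcross (by positivity)

theorem P_le_one_ge (n : ℕ) (hn : 1 ≤ n) (r r' : ℝ) (hr : r ≤ 1) (hr' : 1 < r') (hr0 : r ≠ 0) :
    ((1 / n * ∑ i ∈ Finset.Icc 1 n, (i : ℝ) ^ r) /
        (1 / (n + 1) * ∑ i ∈ Finset.Icc 1 (n + 1), (i : ℝ) ^ r)) ^ (1 / r) ≥
    ((1 / n * ∑ i ∈ Finset.Icc 1 n, (i : ℝ) ^ r') /
        (1 / (n + 1) * ∑ i ∈ Finset.Icc 1 (n + 1), (i : ℝ) ^ r')) ^ (1 / r') := by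
  have hn0 : (0 : ℝ) < (n : ℝ) := by exact_mod_cast hn
  set c : ℝ := ((n : ℝ) + 1) / ((n : ℝ) + 2) with hcdef
  have hc : 0 < c := by positivity
  have hcr : ∀ ρ : ℝ, ρ ≠ 0 → (c ^ ρ) ^ (1 / ρ) = c := by
    intro ρ hρ
    rw [← Real.rpow_mul hc.le, mul_one_div, div_self hρ, Real.rpow_one]
  -- positivity of the ratios
  have hratio : ∀ ρ : ℝ, 0 < (1 / (n : ℝ) * ∑ i ∈ Finset.Icc 1 n, (i : ℝ) ^ ρ) /
      (1 / ((n : ℝ) + 1) * ∑ i ∈ Finset.Icc 1 (n + 1), (i : ℝ) ^ ρ) := by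
    intro ρ
    have hS := sum_rpow_pos n hn ρ
    have hS' := sum_rpow_pos (n + 1) (by omega) ρ
    positivity
  -- RHS ≤ c
  have hRHS : ((1 / (n : ℝ) * ∑ i ∈ Finset.Icc 1 n, (i : ℝ) ^ r') /
      (1 / ((n : ℝ) + 1) * ∑ i ∈ Finset.Icc 1 (n + 1), (i : ℝ) ^ r')) ^ (1 / r') ≤ c := by
    have hconv : ∀ x y a b : ℝ, 0 < x → 0 < y → 0 ≤ a → 0 ≤ b → a + b = 1 →
        (a * x + b * y) ^ r' ≤ a * x ^ r' + b * y ^ r' := by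
      intro x y a b hx hy ha hb hab
      simpa using (convexOn_rpow hr'.le).2 (Set.mem_Ici.mpr hx.le) (Set.mem_Ici.mpr hy.le)
        ha hb hab
    have h1 := ratio_le_c n hn r' (cross_le n r' hconv)
    calc ((1 / (n : ℝ) * ∑ i ∈ Finset.Icc 1 n, (i : ℝ) ^ r') /
          (1 / ((n : ℝ) + 1) * ∑ i ∈ Finset.Icc 1 (n + 1), (i : ℝ) ^ r')) ^ (1 / r')
        ≤ (c ^ r') ^ (1 / r') :=
          Real.rpow_le_rpow (hratio r').le h1 (by positivity)
      _ = c := hcr r' (by linarith)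
  -- c ≤ LHS
  have hLHS : c ≤ ((1 / (n : ℝ) * ∑ i ∈ Finset.Icc 1 n, (i : ℝ) ^ r) /
      (1 / ((n : ℝ) + 1) * ∑ i ∈ Finset.Icc 1 (n + 1), (i : ℝ) ^ r)) ^ (1 / r) := by
    rcases hr0.lt_or_gt with hneg | hpos
    · -- r < 0 : convex case
      have hconv : ∀ x y a b : ℝ, 0 < x → 0 < y → 0 ≤ a → 0 ≤ b → a + b = 1 →
          (a * x + b * y) ^ r ≤ a * x ^ r + b * y ^ r :=
        fun x y a b hx hy ha hb hab => three_pt_nonpos hneg.le hx hy ha hb hab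
      have h1 := ratio_le_c n hn r (cross_le n r hconv)
      have h2 : (c ^ r) ^ (1 / r) ≤ ((1 / (n : ℝ) * ∑ i ∈ Finset.Icc 1 n, (i : ℝ) ^ r) /
          (1 / ((n : ℝ) + 1) * ∑ i ∈ Finset.Icc 1 (n + 1), (i : ℝ) ^ r)) ^ (1 / r) :=
        Real.rpow_le_rpow_of_nonpos (hratio r) h1
          (by rw [one_div]; exact inv_nonpos.mpr hneg.le)
      rw [hcr r (ne_of_lt hneg)] at h2
      exact h2
    · -- 0 < r ≤ 1 : concave case
      have hconc : ∀ x y a b : ℝ, 0 < x → 0 < y → 0 ≤ a → 0 ≤ b → a + b = 1 →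
          a * x ^ r + b * y ^ r ≤ (a * x + b * y) ^ r := by
        intro x y a b hx hy ha hb hab
        simpa using (Real.concaveOn_rpow hpos.le hr).2 (Set.mem_Ici.mpr hx.le)
          (Set.mem_Ici.mpr hy.le) ha hb hab
      have h1 := ratio_ge_c n hn r (cross_ge n r hconc)
      have h2 : (c ^ r) ^ (1 / r) ≤ ((1 / (n : ℝ) * ∑ i ∈ Finset.Icc 1 n, (i : ℝ) ^ r) /
          (1 / ((n : ℝ) + 1) * ∑ i ∈ Finset.Icc 1 (n + 1), (i : ℝ) ^ r)) ^ (1 / r) :=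
        Real.rpow_le_rpow (by positivity) h1 (by positivity)
      rw [hcr r (ne_of_gt hpos)] at h2
      exact h2
  exact le_trans hRHS hLHS
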